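/- Under Assumptions IV and weak monotonicity, and with covariates given by indicators of a finite partition with a fully saturated first stage (instruments Z interacted with all group indicators), the 2SLS estimand satisfies β_2SLS = E[π(X)² · Var[Z|X] · τ(X)] / E[π(X)² · Var[Z|X]]. In particular β_2SLS is a convex combination of the conditional LATEs τ(x). (Theorem 1.) -/

import Mathlib

open Finset

section Defs

variable {Ω 𝓧 : Type*} [Fintype Ω]

/-- Expectation of `f` under weights `p` on a finite outcome space. -/
noncomputable def pexp (p : Ω → ℝ) (f : Ω → ℝ) : ℝ := ∑ ω, p ω * f ω

open Classical in
/-- Probability of the event `A` under weights `p`. -/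
noncomputable def pprob (p : Ω → ℝ) (A : Ω → Prop) : ℝ := ∑ ω, if A ω then p ω else 0

open Classical in
/-- Conditional expectation of `f` given the event `A`. -/
noncomputable def eexp (p : Ω → ℝ) (A : Ω → Prop) (f : Ω → ℝ) : ℝ :=
  (∑ ω, if A ω then p ω * f ω else 0) / pprob p A

/-- Conditional probability of `A` given `B`. -/
noncomputable def cprob (p : Ω → ℝ) (A B : Ω → Prop) : ℝ :=
  pprob p (fun ω => A ω ∧ B ω) / pprob p B

/-- `p` is a probability vector. -/
def IsProb (p : Ω → ℝ) : Prop := (∀ ω, 0 ≤ p ω) ∧ ∑ ω, p ω = 1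

/-- Conditional expectation of `f` given `X = x`. -/
noncomputable def condMean (p : Ω → ℝ) (X : Ω → 𝓧) (f : Ω → ℝ) (x : 𝓧) : ℝ :=
  eexp p (fun ω => X ω = x) f

/-- Conditional expectation of `f` given `X = x` and `Z = z`. -/
noncomputable def condMeanOn (p : Ω → ℝ) (X : Ω → 𝓧) (Z : Ω → ℝ) (f : Ω → ℝ) (x : 𝓧) (z : ℝ) : ℝ :=
  eexp p (fun ω => X ω = x ∧ Z ω = z) f

/-- Conditional cslope coefficient `E[f | Z=1, X=x] - E[f | Z=0, X=x]`. -/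
noncomputable def cslope (p : Ω → ℝ) (X : Ω → 𝓧) (Z : Ω → ℝ) (f : Ω → ℝ) (x : 𝓧) : ℝ :=
  condMeanOn p X Z f x 1 - condMeanOn p X Z f x 0

/-- Conditional variance of `f` given the event `A`. -/
noncomputable def evVar (p : Ω → ℝ) (A : Ω → Prop) (f : Ω → ℝ) : ℝ :=
  eexp p A (fun ω => (f ω - eexp p A f) ^ 2)

/-- Conditional variance of `f` given `X = x`. -/
noncomputable def condVar (p : Ω → ℝ) (X : Ω → 𝓧) (f : Ω → ℝ) (x : 𝓧) : ℝ :=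
  evVar p (fun ω => X ω = x) f

end Defs

section Helpers

variable {Ω : Type*} [Fintype Ω]

open Classical in
lemma pprob_nonneg (p : Ω → ℝ) (hp : ∀ ω, 0 ≤ p ω) (A : Ω → Prop) : 0 ≤ pprob p A := by
  refine Finset.sum_nonneg fun ω _ => ?_
  split <;> simp [hp ω]

lemma pprob_congr (p : Ω → ℝ) {A B : Ω → Prop} (h : ∀ ω, A ω ↔ B ω) :
    pprob p A = pprob p B := by
  classical
  unfold pprob
  refine Finset.sum_congr rfl fun ω _ => ?_
  exact if_congr (h ω) rfl rfl

open Classical in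
lemma sum_if_mul_const (p : Ω → ℝ) (A : Ω → Prop) (c : ℝ) :
    (∑ ω, if A ω then p ω * c else 0) = pprob p A * c := by
  unfold pprob
  rw [Finset.sum_mul]
  refine Finset.sum_congr rfl fun ω _ => ?_
  split <;> simp

open Classical in
lemma sum_split01 (p : Ω → ℝ) {Z : Ω → ℝ} (hZ : ∀ ω, Z ω = 0 ∨ Z ω = 1)
    (A : Ω → Prop) (g : Ω → ℝ) :
    (∑ ω, if A ω then g ω else 0)
      = (∑ ω, if A ω ∧ Z ω = 1 then g ω else 0)
        + (∑ ω, if A ω ∧ Z ω = 0 then g ω else 0) := by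
  rw [← Finset.sum_add_distrib]
  refine Finset.sum_congr rfl fun ω _ => ?_
  rcases hZ ω with h | h <;> by_cases hA : A ω <;> simp [h, hA]

lemma pprob_split01 (p : Ω → ℝ) {Z : Ω → ℝ} (hZ : ∀ ω, Z ω = 0 ∨ Z ω = 1)
    (A : Ω → Prop) :
    pprob p A = pprob p (fun ω => A ω ∧ Z ω = 1) + pprob p (fun ω => A ω ∧ Z ω = 0) := by
  unfold pprob
  rw [← Finset.sum_add_distrib]
  refine Finset.sum_congr rfl fun ω _ => ?_
  rcases hZ ω with h | h <;> by_cases hA : A ω <;> simp [h, hA]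

open Classical in
lemma sum_bin (p : Ω → ℝ) (f : Ω → ℝ) (hf : ∀ ω, f ω = 0 ∨ f ω = 1) (A : Ω → Prop) :
    (∑ ω, if A ω then p ω * f ω else 0) = pprob p (fun ω => A ω ∧ f ω = 1) := by
  unfold pprob
  refine Finset.sum_congr rfl fun ω _ => ?_
  rcases hf ω with h | h <;> by_cases hA : A ω <;> simp [h, hA]

open Classical in
lemma pprob_marg (p : Ω → ℝ) (W : Ω → ℝ) (A : Ω → Prop) :
    ∑ w ∈ Finset.image W Finset.univ, pprob p (fun ω => A ω ∧ W ω = w)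
      = pprob p A := by
  unfold pprob
  rw [Finset.sum_comm]
  refine Finset.sum_congr rfl fun ω _ => ?_
  by_cases hA : A ω
  · rw [Finset.sum_eq_single (W ω)]
    · simp [hA]
    · intro b _ hb
      rw [if_neg]
      rintro ⟨-, h⟩; exact hb h.symm
    · intro h; exact absurd (Finset.mem_image_of_mem W (Finset.mem_univ ω)) h
  · rw [Finset.sum_eq_zero, if_neg hA]
    intro b _
    rw [if_neg]
    rintro ⟨h1, -⟩; exact hA h1

open Classical in
lemma pprob_marg' (p : Ω → ℝ) (W : Ω → ℝ) (A B : Ω → Prop) :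
    ∑ w ∈ Finset.image W Finset.univ, pprob p (fun ω => A ω ∧ W ω = w ∧ B ω)
      = pprob p (fun ω => A ω ∧ B ω) := by
  unfold pprob
  rw [Finset.sum_comm]
  refine Finset.sum_congr rfl fun ω _ => ?_
  by_cases hA : A ω ∧ B ω
  · rw [Finset.sum_eq_single (W ω)]
    · simp [hA.1, hA.2]
    · intro b _ hb
      rw [if_neg]
      rintro ⟨-, h, -⟩; exact hb h.symm
    · intro h; exact absurd (Finset.mem_image_of_mem W (Finset.mem_univ ω)) h
  · rw [Finset.sum_eq_zero, if_neg hA]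
    intro b _
    rw [if_neg]
    rintro ⟨h1, -, h2⟩; exact hA ⟨h1, h2⟩

end Helpers

section PSum

variable {Ω : Type*} [Fintype Ω]

open Classical in
/-- Auxiliary: weighted sum over an event. -/
noncomputable def psum (A : Ω → Prop) (g : Ω → ℝ) : ℝ := ∑ ω, if A ω then g ω else 0

lemma eexp_eq (p : Ω → ℝ) (A : Ω → Prop) (f : Ω → ℝ) :
    eexp p A f = psum A (fun ω => p ω * f ω) / pprob p A := rfl

lemma pprob_eq_psum (p : Ω → ℝ) (A : Ω → Prop) : pprob p A = psum A p := rfl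

open Classical in
lemma psum_congr {A : Ω → Prop} {f g : Ω → ℝ} (h : ∀ ω, A ω → f ω = g ω) :
    psum A f = psum A g := by
  unfold psum
  refine Finset.sum_congr rfl fun ω _ => ?_
  by_cases hA : A ω
  · rw [if_pos hA, if_pos hA, h ω hA]
  · rw [if_neg hA, if_neg hA]

open Classical in
lemma psum_split01 {Z : Ω → ℝ} (hZ : ∀ ω, Z ω = 0 ∨ Z ω = 1) (A : Ω → Prop) (g : Ω → ℝ) :
    psum A g = psum (fun ω => A ω ∧ Z ω = 1) g + psum (fun ω => A ω ∧ Z ω = 0) g := by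
  unfold psum
  rw [← Finset.sum_add_distrib]
  refine Finset.sum_congr rfl fun ω _ => ?_
  rcases hZ ω with h | h <;> by_cases hA : A ω <;> simp [h, hA]

open Classical in
lemma psum_mul_const (p : Ω → ℝ) (A : Ω → Prop) (c : ℝ) :
    psum A (fun ω => p ω * c) = pprob p A * c := by
  unfold psum pprob
  rw [Finset.sum_mul]
  refine Finset.sum_congr rfl fun ω _ => ?_
  split <;> simp

open Classical in
lemma psum_bin (p : Ω → ℝ) {f : Ω → ℝ} (hf : ∀ ω, f ω = 0 ∨ f ω = 1) (A : Ω → Prop) :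
    psum A (fun ω => p ω * f ω) = pprob p (fun ω => A ω ∧ f ω = 1) := by
  unfold psum pprob
  refine Finset.sum_congr rfl fun ω _ => ?_
  rcases hf ω with h | h <;> by_cases hA : A ω <;> simp [h, hA]

end PSum

section Indep

variable {Ω 𝓧 : Type*} [Fintype Ω]

open Classical in
lemma indep_collapse1 (p : Ω → ℝ) (X : Ω → 𝓧) (Y0 Y1 D0 : Ω → ℝ) (x : 𝓧) (R : Ω → Prop) :
    (∑ d0 ∈ Finset.image D0 Finset.univ, ∑ y1 ∈ Finset.image Y1 Finset.univ,
        ∑ y0 ∈ Finset.image Y0 Finset.univ,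
        pprob p (fun ω => X ω = x ∧ Y0 ω = y0 ∧ Y1 ω = y1 ∧ D0 ω = d0 ∧ R ω))
      = pprob p (fun ω => X ω = x ∧ R ω) :=
  calc (∑ d0 ∈ Finset.image D0 Finset.univ, ∑ y1 ∈ Finset.image Y1 Finset.univ,
        ∑ y0 ∈ Finset.image Y0 Finset.univ,
        pprob p (fun ω => X ω = x ∧ Y0 ω = y0 ∧ Y1 ω = y1 ∧ D0 ω = d0 ∧ R ω))
      = ∑ d0 ∈ Finset.image D0 Finset.univ, ∑ y1 ∈ Finset.image Y1 Finset.univ,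
          pprob p (fun ω => X ω = x ∧ Y1 ω = y1 ∧ D0 ω = d0 ∧ R ω) :=
        Finset.sum_congr rfl fun d0 _ => Finset.sum_congr rfl fun y1 _ =>
          pprob_marg' p Y0 _ _
    _ = ∑ d0 ∈ Finset.image D0 Finset.univ,
          pprob p (fun ω => X ω = x ∧ D0 ω = d0 ∧ R ω) :=
        Finset.sum_congr rfl fun d0 _ => pprob_marg' p Y1 _ _
    _ = pprob p (fun ω => X ω = x ∧ R ω) := pprob_marg' p D0 _ _

open Classical in
lemma indep_collapse0 (p : Ω → ℝ) (X : Ω → 𝓧) (Y0 Y1 D0 D1 : Ω → ℝ) (x : 𝓧) (d0 : ℝ)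
    (R : Ω → Prop) :
    (∑ d1 ∈ Finset.image D1 Finset.univ, ∑ y1 ∈ Finset.image Y1 Finset.univ,
        ∑ y0 ∈ Finset.image Y0 Finset.univ,
        pprob p (fun ω => X ω = x ∧ Y0 ω = y0 ∧ Y1 ω = y1 ∧ D0 ω = d0 ∧ D1 ω = d1 ∧ R ω))
      = pprob p (fun ω => X ω = x ∧ D0 ω = d0 ∧ R ω) :=
  calc (∑ d1 ∈ Finset.image D1 Finset.univ, ∑ y1 ∈ Finset.image Y1 Finset.univ,
        ∑ y0 ∈ Finset.image Y0 Finset.univ,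
        pprob p (fun ω => X ω = x ∧ Y0 ω = y0 ∧ Y1 ω = y1 ∧ D0 ω = d0 ∧ D1 ω = d1 ∧ R ω))
      = ∑ d1 ∈ Finset.image D1 Finset.univ, ∑ y1 ∈ Finset.image Y1 Finset.univ,
          pprob p (fun ω => X ω = x ∧ Y1 ω = y1 ∧ D0 ω = d0 ∧ D1 ω = d1 ∧ R ω) :=
        Finset.sum_congr rfl fun d1 _ => Finset.sum_congr rfl fun y1 _ =>
          pprob_marg' p Y0 _ _
    _ = ∑ d1 ∈ Finset.image D1 Finset.univ,
          pprob p (fun ω => X ω = x ∧ D0 ω = d0 ∧ D1 ω = d1 ∧ R ω) :=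
        Finset.sum_congr rfl fun d1 _ => pprob_marg' p Y1 _ _
    _ = ∑ d1 ∈ Finset.image D1 Finset.univ,
          pprob p (fun ω => (X ω = x ∧ D0 ω = d0) ∧ D1 ω = d1 ∧ R ω) :=
        Finset.sum_congr rfl fun d1 _ => pprob_congr p fun ω => by tauto
    _ = pprob p (fun ω => (X ω = x ∧ D0 ω = d0) ∧ R ω) := pprob_marg' p D1 _ _
    _ = pprob p (fun ω => X ω = x ∧ D0 ω = d0 ∧ R ω) := pprob_congr p fun ω => by tauto

open Classical in
lemma indep_collapse0' (p : Ω → ℝ) (X : Ω → 𝓧) (Y0 Y1 D0 D1 : Ω → ℝ) (x : 𝓧) (d0 : ℝ) :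
    (∑ d1 ∈ Finset.image D1 Finset.univ, ∑ y1 ∈ Finset.image Y1 Finset.univ,
        ∑ y0 ∈ Finset.image Y0 Finset.univ,
        pprob p (fun ω => X ω = x ∧ Y0 ω = y0 ∧ Y1 ω = y1 ∧ D0 ω = d0 ∧ D1 ω = d1))
      = pprob p (fun ω => X ω = x ∧ D0 ω = d0) :=
  calc (∑ d1 ∈ Finset.image D1 Finset.univ, ∑ y1 ∈ Finset.image Y1 Finset.univ,
        ∑ y0 ∈ Finset.image Y0 Finset.univ,
        pprob p (fun ω => X ω = x ∧ Y0 ω = y0 ∧ Y1 ω = y1 ∧ D0 ω = d0 ∧ D1 ω = d1))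
      = ∑ d1 ∈ Finset.image D1 Finset.univ, ∑ y1 ∈ Finset.image Y1 Finset.univ,
          pprob p (fun ω => X ω = x ∧ Y1 ω = y1 ∧ D0 ω = d0 ∧ D1 ω = d1) :=
        Finset.sum_congr rfl fun d1 _ => Finset.sum_congr rfl fun y1 _ =>
          pprob_marg' p Y0 _ _
    _ = ∑ d1 ∈ Finset.image D1 Finset.univ,
          pprob p (fun ω => X ω = x ∧ D0 ω = d0 ∧ D1 ω = d1) :=
        Finset.sum_congr rfl fun d1 _ => pprob_marg' p Y1 _ _
    _ = ∑ d1 ∈ Finset.image D1 Finset.univ,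
          pprob p (fun ω => (X ω = x ∧ D0 ω = d0) ∧ D1 ω = d1) :=
        Finset.sum_congr rfl fun d1 _ => pprob_congr p fun ω => by tauto
    _ = pprob p (fun ω => X ω = x ∧ D0 ω = d0) := pprob_marg p D1 _

variable (p : Ω → ℝ) (X : Ω → 𝓧) (Z D0 D1 Y0 Y1 : Ω → ℝ)

lemma ind_D1
    (hindep : ∀ (x : 𝓧) (y0 y1 d0 d1 z : ℝ),
      pprob p (fun ω => X ω = x ∧ Y0 ω = y0 ∧ Y1 ω = y1 ∧ D0 ω = d0 ∧ D1 ω = d1 ∧ Z ω = z) *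
          pprob p (fun ω => X ω = x)
        = pprob p (fun ω => X ω = x ∧ Y0 ω = y0 ∧ Y1 ω = y1 ∧ D0 ω = d0 ∧ D1 ω = d1) *
            pprob p (fun ω => X ω = x ∧ Z ω = z))
    (x : 𝓧) (d1 z : ℝ) :
    pprob p (fun ω => X ω = x ∧ D1 ω = d1 ∧ Z ω = z) * pprob p (fun ω => X ω = x)
      = pprob p (fun ω => X ω = x ∧ D1 ω = d1) * pprob p (fun ω => X ω = x ∧ Z ω = z) := by
  classical
  rw [← indep_collapse1 p X Y0 Y1 D0 x (fun ω => D1 ω = d1 ∧ Z ω = z),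
      ← indep_collapse1 p X Y0 Y1 D0 x (fun ω => D1 ω = d1)]
  simp only [Finset.sum_mul]
  exact Finset.sum_congr rfl fun d0 _ => Finset.sum_congr rfl fun y1 _ =>
    Finset.sum_congr rfl fun y0 _ => hindep x y0 y1 d0 d1 z

lemma ind_D0
    (hindep : ∀ (x : 𝓧) (y0 y1 d0 d1 z : ℝ),
      pprob p (fun ω => X ω = x ∧ Y0 ω = y0 ∧ Y1 ω = y1 ∧ D0 ω = d0 ∧ D1 ω = d1 ∧ Z ω = z) *
          pprob p (fun ω => X ω = x)
        = pprob p (fun ω => X ω = x ∧ Y0 ω = y0 ∧ Y1 ω = y1 ∧ D0 ω = d0 ∧ D1 ω = d1) *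
            pprob p (fun ω => X ω = x ∧ Z ω = z))
    (x : 𝓧) (d0 z : ℝ) :
    pprob p (fun ω => X ω = x ∧ D0 ω = d0 ∧ Z ω = z) * pprob p (fun ω => X ω = x)
      = pprob p (fun ω => X ω = x ∧ D0 ω = d0) * pprob p (fun ω => X ω = x ∧ Z ω = z) := by
  classical
  rw [← indep_collapse0 p X Y0 Y1 D0 D1 x d0 (fun ω => Z ω = z),
      ← indep_collapse0' p X Y0 Y1 D0 D1 x d0]
  simp only [Finset.sum_mul]
  exact Finset.sum_congr rfl fun d1 _ => Finset.sum_congr rfl fun y1 _ =>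
    Finset.sum_congr rfl fun y0 _ => hindep x y0 y1 d0 d1 z

end Indep

section Sigma

lemma sigma_eq {Ω 𝓧 : Type*} [Fintype Ω] (p : Ω → ℝ) (hp : IsProb p)
    (X : Ω → 𝓧) (Z D0 D1 Y0 Y1 : Ω → ℝ)
    (hZ : ∀ ω, Z ω = 0 ∨ Z ω = 1)
    (hD0 : ∀ ω, D0 ω = 0 ∨ D0 ω = 1) (hD1 : ∀ ω, D1 ω = 0 ∨ D1 ω = 1)
    (hindep : ∀ (x : 𝓧) (y0 y1 d0 d1 z : ℝ),
      pprob p (fun ω => X ω = x ∧ Y0 ω = y0 ∧ Y1 ω = y1 ∧ D0 ω = d0 ∧ D1 ω = d1 ∧ Z ω = z) *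
          pprob p (fun ω => X ω = x)
        = pprob p (fun ω => X ω = x ∧ Y0 ω = y0 ∧ Y1 ω = y1 ∧ D0 ω = d0 ∧ D1 ω = d1) *
            pprob p (fun ω => X ω = x ∧ Z ω = z))
    (hrel : ∀ x : 𝓧, 0 < pprob p (fun ω => X ω = x) →
      0 < cprob p (fun ω => Z ω = 1) (fun ω => X ω = x) ∧
      cprob p (fun ω => Z ω = 1) (fun ω => X ω = x) < 1 ∧
      0 < cprob p (fun ω => D1 ω ≠ D0 ω) (fun ω => X ω = x))
    (hmono : ∀ x : 𝓧,
      (∀ ω, 0 < p ω → X ω = x → D0 ω ≤ D1 ω) ∨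
      (∀ ω, 0 < p ω → X ω = x → D1 ω ≤ D0 ω))
    (D : Ω → ℝ)
    (hD : ∀ ω, D ω = if Z ω = 1 then D1 ω else D0 ω)
    (x : 𝓧) (hx : 0 < pprob p (fun ω => X ω = x)) :
    eexp p (fun ω' => X ω' = x)
        (fun ω' => (condMeanOn p X Z D x (Z ω') - condMean p X D x) ^ 2)
      = (cprob p (fun ω' => D1 ω' ≠ D0 ω') (fun ω' => X ω' = x)) ^ 2 * condVar p X Z x := by
  classical
  set Px := pprob p (fun ω => X ω = x) with hPxdef
  set P1 := pprob p (fun ω => X ω = x ∧ Z ω = 1) with hP1def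
  set P0 := pprob p (fun ω => X ω = x ∧ Z ω = 0) with hP0def
  have hPx0 : Px ≠ 0 := ne_of_gt hx
  have hsplit : Px = P1 + P0 := pprob_split01 p hZ _
  obtain ⟨hq1, hq2, hqd⟩ := hrel x hx
  have hcomm : pprob p (fun ω => Z ω = 1 ∧ X ω = x) = P1 :=
    pprob_congr p fun ω => and_comm
  rw [cprob, hcomm, ← hPxdef] at hq1 hq2
  have hP1pos : 0 < P1 := by
    have h := mul_pos hq1 hx
    rwa [div_mul_cancel₀ _ hPx0] at h
  have hP1lt : P1 < Px := (div_lt_one hx).mp hq2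
  have hP0pos : 0 < P0 := by linarith
  have hP10 : P1 ≠ 0 := ne_of_gt hP1pos
  have hP00 : P0 ≠ 0 := ne_of_gt hP0pos
  set B1 := pprob p (fun ω => X ω = x ∧ D1 ω = 1) with hB1def
  set B0 := pprob p (fun ω => X ω = x ∧ D0 ω = 1) with hB0def
  set N := pprob p (fun ω => D1 ω ≠ D0 ω ∧ X ω = x) with hNdef
  have hInd1 := ind_D1 p X Z D0 D1 Y0 Y1 hindep x 1 1
  have hInd0 := ind_D0 p X Z D0 D1 Y0 Y1 hindep x 1 0
  have hA1 : pprob p (fun ω => X ω = x ∧ D1 ω = 1 ∧ Z ω = 1) = B1 * P1 / Px := by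
    rw [eq_div_iff hPx0]; exact hInd1
  have hA0 : pprob p (fun ω => X ω = x ∧ D0 ω = 1 ∧ Z ω = 0) = B0 * P0 / Px := by
    rw [eq_div_iff hPx0]; exact hInd0
  -- numerators of the conditional means
  have hnum1 : psum (fun ω => X ω = x ∧ Z ω = 1) (fun ω => p ω * D ω) = B1 * P1 / Px := by
    rw [psum_congr (g := fun ω => p ω * D1 ω)
        (fun ω h => by rw [hD ω, if_pos h.2]),
      psum_bin p hD1, ← hA1]
    exact pprob_congr p fun ω => by tauto
  have hnum0 : psum (fun ω => X ω = x ∧ Z ω = 0) (fun ω => p ω * D ω) = B0 * P0 / Px := by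
    rw [psum_congr (g := fun ω => p ω * D0 ω)
        (fun ω h => by rw [hD ω, if_neg (by rw [h.2]; norm_num)]),
      psum_bin p hD0, ← hA0]
    exact pprob_congr p fun ω => by tauto
  -- conditional means given Z = 1 and Z = 0
  have hE1 : condMeanOn p X Z D x 1 = B1 / Px := by
    unfold condMeanOn
    rw [eexp_eq, hnum1, ← hP1def, div_right_comm, mul_div_assoc, div_self hP10,
      mul_one]
  have hE0 : condMeanOn p X Z D x 0 = B0 / Px := by
    unfold condMeanOn
    rw [eexp_eq, hnum0, ← hP0def, div_right_comm, mul_div_assoc, div_self hP00,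
      mul_one]
  -- unconditional (given X = x) mean of D
  have hμ : condMean p X D x = (B1 * P1 + B0 * P0) / Px ^ 2 := by
    unfold condMean
    rw [eexp_eq, psum_split01 hZ, hnum1, hnum0, ← hPxdef, ← add_div,
      div_div, ← pow_two]
  -- sigma squared
  have hσ : eexp p (fun ω' => X ω' = x)
      (fun ω' => (condMeanOn p X Z D x (Z ω') - condMean p X D x) ^ 2)
      = P1 * P0 * (B1 - B0) ^ 2 / Px ^ 4 := by
    rw [eexp_eq, psum_split01 hZ, ← hPxdef,
      psum_congr (A := fun ω => X ω = x ∧ Z ω = 1)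
        (g := fun ω => p ω * (condMeanOn p X Z D x 1 - condMean p X D x) ^ 2)
        (fun ω h => by rw [h.2]),
      psum_congr (A := fun ω => X ω = x ∧ Z ω = 0)
        (g := fun ω => p ω * (condMeanOn p X Z D x 0 - condMean p X D x) ^ 2)
        (fun ω h => by rw [h.2]),
      psum_mul_const, psum_mul_const, ← hP1def, ← hP0def, hE1, hE0, hμ]
    have hP0eq : P0 = Px - P1 := by linarith
    rw [hP0eq]
    field_simp
    ring
  -- conditional variance of Z given X = x
  have hmean : eexp p (fun ω => X ω = x) Z = P1 / Px := by
    rw [eexp_eq, psum_bin p hZ, ← hP1def, ← hPxdef]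
  have hVar : condVar p X Z x = P1 * P0 / Px ^ 2 := by
    unfold condVar evVar
    rw [hmean, eexp_eq, psum_split01 hZ, ← hPxdef,
      psum_congr (A := fun ω => X ω = x ∧ Z ω = 1)
        (g := fun ω => p ω * ((1:ℝ) - P1 / Px) ^ 2) (fun ω h => by rw [h.2]),
      psum_congr (A := fun ω => X ω = x ∧ Z ω = 0)
        (g := fun ω => p ω * ((0:ℝ) - P1 / Px) ^ 2) (fun ω h => by rw [h.2]),
      psum_mul_const, psum_mul_const, ← hP1def, ← hP0def]
    have hP0eq : P0 = Px - P1 := by linarith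
    rw [hP0eq]
    field_simp
    ring
  -- monotonicity: (B1 - B0)^2 = N^2
  have hN2 : (B1 - B0) ^ 2 = N ^ 2 := by
    rcases hmono x with hm | hm
    · have key : B1 = N + B0 := by
        rw [hB1def, hNdef, hB0def, pprob, pprob, pprob, ← Finset.sum_add_distrib]
        refine Finset.sum_congr rfl fun ω _ => ?_
        rcases (hp.1 ω).lt_or_eq with hpω | hpω
        · by_cases hXω : X ω = x
          · rcases hD0 ω with h0 | h0 <;> rcases hD1 ω with h1 | h1
            · simp [hXω, h0, h1]
            · simp [hXω, h0, h1]
            · exact absurd (hm ω hpω hXω) (by rw [h0, h1]; norm_num)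
            · simp [hXω, h0, h1]
          · simp [hXω]
        · simp [← hpω]
      have h : B1 - B0 = N := by linarith
      rw [h]
    · have key : B0 = N + B1 := by
        rw [hB1def, hNdef, hB0def, pprob, pprob, pprob, ← Finset.sum_add_distrib]
        refine Finset.sum_congr rfl fun ω _ => ?_
        rcases (hp.1 ω).lt_or_eq with hpω | hpω
        · by_cases hXω : X ω = x
          · rcases hD0 ω with h0 | h0 <;> rcases hD1 ω with h1 | h1
            · simp [hXω, h0, h1]
            · exact absurd (hm ω hpω hXω) (by rw [h0, h1]; norm_num)
            · simp [hXω, h0, h1]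
            · simp [hXω, h0, h1]
          · simp [hXω]
        · simp [← hpω]
      have h : B1 - B0 = -N := by linarith
      rw [h]
      ring
  rw [hσ, cprob, ← hNdef, ← hPxdef, hVar, hN2]
  field_simp

end Sigma


/-- Theorem 1: under Assumption IV, weak monotonicity, and the
saturated Angrist–Imbens (1995) specification, given Kolesár's lemma
`β_2SLS = E[σ²(X)·τ(X)]/E[σ²(X)]` with
`σ²(X) = E[(E[D|X,Z] - E[D|X])² | X]`, the 2SLS estimand satisfies
`β_2SLS = E[π(X)²·Var[Z|X]·τ(X)] / E[π(X)²·Var[Z|X]]`, a convex combination of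
the conditional LATEs. -/
theorem stmt8 {Ω 𝓧 : Type*} [Fintype Ω] [Fintype 𝓧] (p : Ω → ℝ) (hp : IsProb p)
    (X : Ω → 𝓧) (Z D0 D1 Y0 Y1 : Ω → ℝ)
    (hZ : ∀ ω, Z ω = 0 ∨ Z ω = 1)
    (hD0 : ∀ ω, D0 ω = 0 ∨ D0 ω = 1) (hD1 : ∀ ω, D1 ω = 0 ∨ D1 ω = 1)
    (hindep : ∀ (x : 𝓧) (y0 y1 d0 d1 z : ℝ),
      pprob p (fun ω => X ω = x ∧ Y0 ω = y0 ∧ Y1 ω = y1 ∧ D0 ω = d0 ∧ D1 ω = d1 ∧ Z ω = z) *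
          pprob p (fun ω => X ω = x)
        = pprob p (fun ω => X ω = x ∧ Y0 ω = y0 ∧ Y1 ω = y1 ∧ D0 ω = d0 ∧ D1 ω = d1) *
            pprob p (fun ω => X ω = x ∧ Z ω = z))
    (hrel : ∀ x : 𝓧, 0 < pprob p (fun ω => X ω = x) →
      0 < cprob p (fun ω => Z ω = 1) (fun ω => X ω = x) ∧
      cprob p (fun ω => Z ω = 1) (fun ω => X ω = x) < 1 ∧
      0 < cprob p (fun ω => D1 ω ≠ D0 ω) (fun ω => X ω = x))
    (hmono : ∀ x : 𝓧,
      (∀ ω, 0 < p ω → X ω = x → D0 ω ≤ D1 ω) ∨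
      (∀ ω, 0 < p ω → X ω = x → D1 ω ≤ D0 ω))
    (D Y : Ω → ℝ)
    (hD : ∀ ω, D ω = if Z ω = 1 then D1 ω else D0 ω)
    (hY : ∀ ω, Y ω = if D ω = 1 then Y1 ω else Y0 ω)
    (β2SLS : ℝ)
    -- Kolesár's lemma for the saturated 2SLS specification, taken as given
    (hKolesar : β2SLS =
      pexp p (fun ω =>
          eexp p (fun ω' => X ω' = X ω)
              (fun ω' => (condMeanOn p X Z D (X ω) (Z ω') - condMean p X D (X ω)) ^ 2) *
            eexp p (fun ω' => D1 ω' ≠ D0 ω' ∧ X ω' = X ω) (fun ω' => Y1 ω' - Y0 ω')) /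
        pexp p (fun ω =>
          eexp p (fun ω' => X ω' = X ω)
              (fun ω' => (condMeanOn p X Z D (X ω) (Z ω') - condMean p X D (X ω)) ^ 2))) :
    β2SLS =
      pexp p (fun ω =>
          (cprob p (fun ω' => D1 ω' ≠ D0 ω') (fun ω' => X ω' = X ω)) ^ 2 *
            condVar p X Z (X ω) *
            eexp p (fun ω' => D1 ω' ≠ D0 ω' ∧ X ω' = X ω) (fun ω' => Y1 ω' - Y0 ω')) /
        pexp p (fun ω =>
          (cprob p (fun ω' => D1 ω' ≠ D0 ω') (fun ω' => X ω' = X ω)) ^ 2 *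
            condVar p X Z (X ω)) := by
  classical
  have hXpos : ∀ ω : Ω, 0 < p ω → 0 < pprob p (fun ω' => X ω' = X ω) := by
    intro ω hpω
    refine lt_of_lt_of_le hpω ?_
    unfold pprob
    have h := Finset.single_le_sum
      (f := fun ω' => if X ω' = X ω then p ω' else 0)
      (fun i _ => by split <;> simp [hp.1 i]) (Finset.mem_univ ω)
    simpa using h
  rw [hKolesar]
  congr 1
  · unfold pexp
    refine Finset.sum_congr rfl fun ω _ => ?_
    dsimp only
    rcases (hp.1 ω).lt_or_eq with hpω | hpω
    · rw [sigma_eq p hp X Z D0 D1 Y0 Y1 hZ hD0 hD1 hindep hrel hmono D hD (X ω)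
        (hXpos ω hpω)]
    · rw [← hpω]
      ring
  · unfold pexp
    refine Finset.sum_congr rfl fun ω _ => ?_
    dsimp only
    rcases (hp.1 ω).lt_or_eq with hpω | hpω
    · rw [sigma_eq p hp X Z D0 D1 Y0 Y1 hZ hD0 hD1 hindep hrel hmono D hD (X ω)
        (hXpos ω hpω)]
    · rw [← hpω]
      ring
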